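/- The simplicial complex Δₙ (n ≥ 4) defined by the stated minimal nonfaces has exactly n(n−1)·3^{n−1} facets with profile a permutation of (3,2,1,1,…,1) and C(n,3)·3ⁿ facets with profile a permutation of (2,2,2,1,…,1), hence n(n−1)·3^{n−1} + C(n,3)·3ⁿ facets in total. -/

import Mathlib

open Finset

/-- The profile of a subset `U` of the ground set `{x_{ij}} = Fin n × Fin 3`:
`profile U i` is the number of `j` with `x_{ij} ∈ U`. -/
def profileOf {n : ℕ} (U : Finset (Fin n × Fin 3)) (i : Fin n) : ℕ :=
  (U.filter (fun p => p.1 = i)).card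

/-- A profile is *bad* if, up to permutation of the indices, it equals
`(3,3,0,…,0)`, `(3,2,2,0,…,0)` or `(2,2,2,2,0,…,0)`. -/
def IsBadProfile {n : ℕ} (c : Fin n → ℕ) : Prop :=
  (∃ i j, i ≠ j ∧ c i = 3 ∧ c j = 3 ∧ ∀ k, k ≠ i → k ≠ j → c k = 0) ∨
  (∃ i j k, i ≠ j ∧ i ≠ k ∧ j ≠ k ∧ c i = 3 ∧ c j = 2 ∧ c k = 2 ∧
    ∀ l, l ≠ i → l ≠ j → l ≠ k → c l = 0) ∨
  (∃ i j k l, i ≠ j ∧ i ≠ k ∧ i ≠ l ∧ j ≠ k ∧ j ≠ l ∧ k ≠ l ∧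
    c i = 2 ∧ c j = 2 ∧ c k = 2 ∧ c l = 2 ∧
    ∀ m, m ≠ i → m ≠ j → m ≠ k → m ≠ l → c m = 0)

/-- `U` is a face of the simplicial complex `Δₙ`: it contains no (minimal)
nonface, i.e. no subset whose profile is bad. -/
def IsFaceD (n : ℕ) (U : Finset (Fin n × Fin 3)) : Prop :=
  ¬ ∃ W : Finset (Fin n × Fin 3), W ⊆ U ∧ IsBadProfile (profileOf W)

/-- `U` is a facet (maximal face) of `Δₙ`. -/
def IsFacetD (n : ℕ) (U : Finset (Fin n × Fin 3)) : Prop :=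
  IsFaceD n U ∧ ∀ W : Finset (Fin n × Fin 3), IsFaceD n W → U ⊆ W → W = U

/-- A profile is a permutation of `(3,2,1,1,…,1)`. -/
def IsProfile321 {n : ℕ} (c : Fin n → ℕ) : Prop :=
  ∃ i j, i ≠ j ∧ c i = 3 ∧ c j = 2 ∧ ∀ k, k ≠ i → k ≠ j → c k = 1

/-- A profile is a permutation of `(2,2,2,1,…,1)`. -/
def IsProfile2221 {n : ℕ} (c : Fin n → ℕ) : Prop :=
  ∃ i j k, i ≠ j ∧ i ≠ k ∧ j ≠ k ∧ c i = 2 ∧ c j = 2 ∧ c k = 2 ∧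
    ∀ l, l ≠ i → l ≠ j → l ≠ k → c l = 1

theorem profile_le_three {n : ℕ} (U : Finset (Fin n × Fin 3)) (i : Fin n) :
    profileOf U i ≤ 3 := by
  have h : (U.filter (fun p => p.1 = i)) ⊆ ({i} ×ˢ univ) := by
    intro p hp
    simp only [Finset.mem_filter] at hp
    simp only [Finset.mem_product, Finset.mem_singleton, Finset.mem_univ, and_true]
    exact hp.2
  calc profileOf U i ≤ ({i} ×ˢ (univ : Finset (Fin 3))).card := Finset.card_le_card h
  _ = 3 := by simp

theorem profile_mono {n : ℕ} {W U : Finset (Fin n × Fin 3)} (h : W ⊆ U) (i : Fin n) :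
    profileOf W i ≤ profileOf U i :=
  Finset.card_le_card (Finset.filter_subset_filter _ h)

theorem profile_realize {n : ℕ} (U : Finset (Fin n × Fin 3)) (d : Fin n → ℕ)
    (h : ∀ i, d i ≤ profileOf U i) :
    ∃ W, W ⊆ U ∧ ∀ i, profileOf W i = d i := by
  choose T hTsub hTcard using fun i => Finset.exists_subset_card_eq (h i)
  refine ⟨Finset.univ.biUnion T, ?_, ?_⟩
  · intro p hp
    rcases Finset.mem_biUnion.1 hp with ⟨k, -, hk⟩
    exact (Finset.filter_subset _ _) (hTsub k hk)
  · intro i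
    have : (Finset.univ.biUnion T).filter (fun p => p.1 = i) = T i := by
      ext p
      simp only [Finset.mem_filter, Finset.mem_biUnion, Finset.mem_univ, true_and]
      constructor
      · rintro ⟨⟨k, hk⟩, hpi⟩
        have : p.1 = k := (Finset.mem_filter.1 (hTsub k hk)).2
        have hki : k = i := by rw [← this, hpi]
        rwa [hki] at hk
      · intro hp
        exact ⟨⟨i, hp⟩, (Finset.mem_filter.1 (hTsub i hp)).2⟩
    rw [profileOf, this, hTcard]

theorem profile_insert {n : ℕ} (U : Finset (Fin n × Fin 3)) (p : Fin n × Fin 3)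
    (hp : p ∉ U) (k : Fin n) :
    profileOf (insert p U) k = if p.1 = k then profileOf U k + 1 else profileOf U k := by
  unfold profileOf
  rw [Finset.filter_insert]
  split
  · rw [Finset.card_insert_of_notMem (fun h => hp (Finset.mem_filter.1 h).1)]
  · rfl

theorem profile_full {n : ℕ} {U : Finset (Fin n × Fin 3)} {i : Fin n}
    (h : profileOf U i = 3) (j : Fin 3) : (i, j) ∈ U := by
  have hsub : (U.filter (fun p => p.1 = i)) ⊆ ({i} ×ˢ univ) := by
    intro p hp
    simp only [Finset.mem_filter] at hp
    simp only [Finset.mem_product, Finset.mem_singleton, Finset.mem_univ, and_true]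
    exact hp.2
  have hcard : ({i} ×ˢ (univ : Finset (Fin 3))).card = 3 := by simp
  have heq : (U.filter (fun p => p.1 = i)) = ({i} ×ˢ univ) :=
    Finset.eq_of_subset_of_card_le hsub (by rw [hcard]; exact h.ge)
  have : (i, j) ∈ U.filter (fun p => p.1 = i) := by
    rw [heq]; simp [Finset.mem_product]
  exact (Finset.mem_filter.1 this).1

def GoodP {n : ℕ} (c : Fin n → ℕ) : Prop :=
  (¬ ∃ i j, i ≠ j ∧ 3 ≤ c i ∧ 3 ≤ c j) ∧
  (¬ ∃ i j k, i ≠ j ∧ i ≠ k ∧ j ≠ k ∧ 3 ≤ c i ∧ 2 ≤ c j ∧ 2 ≤ c k) ∧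
  (¬ ∃ i j k l, i ≠ j ∧ i ≠ k ∧ i ≠ l ∧ j ≠ k ∧ j ≠ l ∧ k ≠ l ∧
      2 ≤ c i ∧ 2 ≤ c j ∧ 2 ≤ c k ∧ 2 ≤ c l)

theorem goodP_antitone {n : ℕ} {c c' : Fin n → ℕ} (h : ∀ i, c i ≤ c' i)
    (hg : GoodP c') : GoodP c := by
  obtain ⟨g1, g2, g3⟩ := hg
  refine ⟨?_, ?_, ?_⟩
  · rintro ⟨i, j, hij, hi, hj⟩
    exact g1 ⟨i, j, hij, le_trans hi (h i), le_trans hj (h j)⟩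
  · rintro ⟨i, j, k, h1, h2, h3, hi, hj, hk⟩
    exact g2 ⟨i, j, k, h1, h2, h3, le_trans hi (h i), le_trans hj (h j), le_trans hk (h k)⟩
  · rintro ⟨i, j, k, l, h1, h2, h3, h4, h5, h6, hi, hj, hk, hl⟩
    exact g3 ⟨i, j, k, l, h1, h2, h3, h4, h5, h6, le_trans hi (h i), le_trans hj (h j),
      le_trans hk (h k), le_trans hl (h l)⟩

theorem face_iff_goodP {n : ℕ} (U : Finset (Fin n × Fin 3)) :
    IsFaceD n U ↔ GoodP (profileOf U) := by
  constructor
  · intro hface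
    by_contra hng
    apply hface
    by_cases h1 : ∃ i j, i ≠ j ∧ 3 ≤ profileOf U i ∧ 3 ≤ profileOf U j
    · obtain ⟨i, j, hij, hi, hj⟩ := h1
      set d : Fin n → ℕ := fun k => if k = i then 3 else if k = j then 3 else 0 with hd
      obtain ⟨W, hWU, hW⟩ := profile_realize U d (by
        intro k
        simp only [hd]
        split
        · next h => subst h; exact hi
        · split
          · next h => subst h; exact hj
          · exact Nat.zero_le _)
      refine ⟨W, hWU, Or.inl ⟨i, j, hij, ?_, ?_, ?_⟩⟩
      · rw [hW]; simp [hd]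
      · rw [hW]; simp [hd, hij.symm]
      · intro k hki hkj; rw [hW]; simp [hd, hki, hkj]
    · by_cases h2 : ∃ i j k, i ≠ j ∧ i ≠ k ∧ j ≠ k ∧ 3 ≤ profileOf U i ∧
          2 ≤ profileOf U j ∧ 2 ≤ profileOf U k
      · obtain ⟨i, j, k, hij, hik, hjk, hi, hj, hk⟩ := h2
        set d : Fin n → ℕ := fun m => if m = i then 3 else if m = j then 2
          else if m = k then 2 else 0 with hd
        obtain ⟨W, hWU, hW⟩ := profile_realize U d (by
          intro m
          simp only [hd]
          split
          · next h => subst h; exact hi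
          · split
            · next h => subst h; exact hj
            · split
              · next h => subst h; exact hk
              · exact Nat.zero_le _)
        refine ⟨W, hWU, Or.inr (Or.inl ⟨i, j, k, hij, hik, hjk, ?_, ?_, ?_, ?_⟩)⟩
        · rw [hW]; simp [hd]
        · rw [hW]; simp [hd, hij.symm]
        · rw [hW]; simp [hd, hik.symm, hjk.symm]
        · intro m hmi hmj hmk; rw [hW]; simp [hd, hmi, hmj, hmk]
      · have h3 : ∃ i j k l, i ≠ j ∧ i ≠ k ∧ i ≠ l ∧ j ≠ k ∧ j ≠ l ∧ k ≠ l ∧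
            2 ≤ profileOf U i ∧ 2 ≤ profileOf U j ∧ 2 ≤ profileOf U k ∧ 2 ≤ profileOf U l := by
          by_contra h3
          exact hng ⟨h1, h2, h3⟩
        obtain ⟨i, j, k, l, h1', h2', h3', h4', h5', h6', hi, hj, hk, hl⟩ := h3
        set d : Fin n → ℕ := fun m => if m = i then 2 else if m = j then 2
          else if m = k then 2 else if m = l then 2 else 0 with hd
        obtain ⟨W, hWU, hW⟩ := profile_realize U d (by
          intro m
          simp only [hd]
          split
          · next h => subst h; exact hi
          · split
            · next h => subst h; exact hj
            · split
              · next h => subst h; exact hk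
              · split
                · next h => subst h; exact hl
                · exact Nat.zero_le _)
        refine ⟨W, hWU, Or.inr (Or.inr
          ⟨i, j, k, l, h1', h2', h3', h4', h5', h6', ?_, ?_, ?_, ?_, ?_⟩)⟩
        · rw [hW]; simp [hd]
        · rw [hW]; simp [hd, h1'.symm]
        · rw [hW]; simp [hd, h2'.symm, h4'.symm]
        · rw [hW]; simp [hd, h3'.symm, h5'.symm, h6'.symm]
        · intro m hmi hmj hmk hml; rw [hW]; simp [hd, hmi, hmj, hmk, hml]
  · rintro ⟨g1, g2, g3⟩ ⟨W, hWU, hbad⟩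
    have hm : ∀ i, profileOf W i ≤ profileOf U i := profile_mono hWU
    rcases hbad with ⟨i, j, hij, hi, hj, -⟩ | ⟨i, j, k, h1, h2, h3, hi, hj, hk, -⟩ |
      ⟨i, j, k, l, h1, h2, h3, h4, h5, h6, hi, hj, hk, hl, -⟩
    · exact g1 ⟨i, j, hij, hi ▸ hm i, hj ▸ hm j⟩
    · exact g2 ⟨i, j, k, h1, h2, h3, hi ▸ hm i, hj ▸ hm j, hk ▸ hm k⟩
    · exact g3 ⟨i, j, k, l, h1, h2, h3, h4, h5, h6, hi ▸ hm i, hj ▸ hm j, hk ▸ hm k, hl ▸ hm l⟩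

def bumpP {n : ℕ} (c : Fin n → ℕ) (i : Fin n) : Fin n → ℕ :=
  fun m => if m = i then c m + 1 else c m

theorem profile321_goodP {n : ℕ} {c : Fin n → ℕ} (h : IsProfile321 c) : GoodP c := by
  obtain ⟨i, j, hij, hi, hj, hrest⟩ := h
  have key3 : ∀ m, 3 ≤ c m → m = i := by
    intro m hm
    by_contra hmi
    by_cases hmj : m = j
    · subst hmj; omega
    · have := hrest m hmi hmj; omega
  have key2 : ∀ m, 2 ≤ c m → m = i ∨ m = j := by
    intro m hm
    by_cases hmi : m = i
    · exact Or.inl hmi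
    by_cases hmj : m = j
    · exact Or.inr hmj
    · have := hrest m hmi hmj; omega
  refine ⟨?_, ?_, ?_⟩
  · rintro ⟨a, b, hab, ha, hb⟩
    exact hab ((key3 a ha).trans (key3 b hb).symm)
  · rintro ⟨a, b, d, hab, had, hbd, ha, hb, hd⟩
    have hai := key3 a ha
    rcases key2 b hb with hb' | hb'
    · exact hab (hai.trans hb'.symm)
    rcases key2 d hd with hd' | hd'
    · exact had (hai.trans hd'.symm)
    · exact hbd (hb'.trans hd'.symm)
  · rintro ⟨a, b, d, e, hab, had, hae, hbd, hbe, hde, ha, hb, hd, he⟩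
    rcases key2 a ha with h1 | h1 <;> rcases key2 b hb with h2 | h2 <;>
      rcases key2 d hd with h3 | h3 <;>
      first
        | exact hab (h1.trans h2.symm)
        | exact had (h1.trans h3.symm)
        | exact hbd (h2.trans h3.symm)

theorem profile2221_goodP {n : ℕ} {c : Fin n → ℕ} (h : IsProfile2221 c) : GoodP c := by
  obtain ⟨i, j, k, hij, hik, hjk, hi, hj, hk, hrest⟩ := h
  have key2 : ∀ m, 2 ≤ c m → m = i ∨ m = j ∨ m = k := by
    intro m hm
    by_cases h1 : m = i; · exact Or.inl h1
    by_cases h2 : m = j; · exact Or.inr (Or.inl h2)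
    by_cases h3 : m = k; · exact Or.inr (Or.inr h3)
    have := hrest m h1 h2 h3; omega
  have key3 : ∀ m, ¬ (3 ≤ c m) := by
    intro m hm
    rcases key2 m (by omega) with h | h | h <;> subst h <;> omega
  refine ⟨?_, ?_, ?_⟩
  · rintro ⟨a, b, hab, ha, hb⟩; exact key3 a ha
  · rintro ⟨a, b, d, hab, had, hbd, ha, hb, hd⟩; exact key3 a ha
  · rintro ⟨a, b, d, e, hab, had, hae, hbd, hbe, hde, ha, hb, hd, he⟩
    rcases key2 a ha with h1 | h1 | h1 <;> rcases key2 b hb with h2 | h2 | h2 <;>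
      rcases key2 d hd with h3 | h3 | h3 <;> rcases key2 e he with h4 | h4 | h4 <;>
      first
        | exact hab (h1.trans h2.symm)
        | exact had (h1.trans h3.symm)
        | exact hae (h1.trans h4.symm)
        | exact hbd (h2.trans h3.symm)
        | exact hbe (h2.trans h4.symm)
        | exact hde (h3.trans h4.symm)

theorem bumpP_ne {n : ℕ} (c : Fin n → ℕ) {i m : Fin n} (h : m ≠ i) :
    bumpP c i m = c m := if_neg h

theorem bumpP_self {n : ℕ} (c : Fin n → ℕ) (i : Fin n) :
    bumpP c i i = c i + 1 := if_pos rfl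

theorem profile321_bump_bad {n : ℕ} {c : Fin n → ℕ} (h : IsProfile321 c)
    {t : Fin n} (ht : c t ≤ 2) : ¬ GoodP (bumpP c t) := by
  obtain ⟨i, j, hij, hi, hj, hrest⟩ := h
  have hti : t ≠ i := fun h => by subst h; omega
  intro hg
  by_cases htj : t = j
  · subst htj
    refine hg.1 ⟨i, t, hij, ?_, ?_⟩
    · rw [bumpP_ne c (Ne.symm hti)]; omega
    · rw [bumpP_self]; omega
  · refine hg.2.1 ⟨i, j, t, hij, Ne.symm hti, Ne.symm htj, ?_, ?_, ?_⟩
    · rw [bumpP_ne c (Ne.symm hti)]; omega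
    · rw [bumpP_ne c (Ne.symm htj)]; omega
    · rw [bumpP_self]; have := hrest t hti htj; omega

theorem profile2221_bump_bad {n : ℕ} {c : Fin n → ℕ} (h : IsProfile2221 c)
    (t : Fin n) : ¬ GoodP (bumpP c t) := by
  obtain ⟨i, j, k, hij, hik, hjk, hi, hj, hk, hrest⟩ := h
  intro hg
  by_cases hti : t = i
  · subst hti
    refine hg.2.1 ⟨t, j, k, hij, hik, hjk, ?_, ?_, ?_⟩
    · rw [bumpP_self]; omega
    · rw [bumpP_ne c (Ne.symm hij)]; omega
    · rw [bumpP_ne c (Ne.symm hik)]; omega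
  by_cases htj : t = j
  · subst htj
    refine hg.2.1 ⟨t, i, k, Ne.symm hij, hjk, hik, ?_, ?_, ?_⟩
    · rw [bumpP_self]; omega
    · rw [bumpP_ne c hij]; omega
    · rw [bumpP_ne c (Ne.symm hjk)]; omega
  by_cases htk : t = k
  · subst htk
    refine hg.2.1 ⟨t, i, j, Ne.symm hik, Ne.symm hjk, hij, ?_, ?_, ?_⟩
    · rw [bumpP_self]; omega
    · rw [bumpP_ne c hik]; omega
    · rw [bumpP_ne c hjk]; omega
  · refine hg.2.2 ⟨i, j, k, t, hij, hik, Ne.symm hti, hjk, Ne.symm htj, Ne.symm htk,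
      ?_, ?_, ?_, ?_⟩
    · rw [bumpP_ne c (Ne.symm hti)]; omega
    · rw [bumpP_ne c (Ne.symm htj)]; omega
    · rw [bumpP_ne c (Ne.symm htk)]; omega
    · rw [bumpP_self]; have := hrest t hti htj htk; omega

theorem goodP_bump_lt_two {n : ℕ} {c : Fin n → ℕ} {i : Fin n} (hg : GoodP c)
    (h : c i + 1 < 2) : GoodP (bumpP c i) := by
  have key : ∀ m, 2 ≤ bumpP c i m → bumpP c i m = c m := by
    intro m hm
    by_cases hmi : m = i
    · subst hmi; rw [bumpP_self] at hm; omega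
    · exact bumpP_ne c hmi
  refine ⟨?_, ?_, ?_⟩
  · rintro ⟨a, b, hab, ha, hb⟩
    rw [key a (by omega)] at ha
    rw [key b (by omega)] at hb
    exact hg.1 ⟨a, b, hab, ha, hb⟩
  · rintro ⟨a, b, d, h1, h2, h3, ha, hb, hd⟩
    rw [key a (by omega)] at ha
    rw [key b hb] at hb
    rw [key d hd] at hd
    exact hg.2.1 ⟨a, b, d, h1, h2, h3, ha, hb, hd⟩
  · rintro ⟨a, b, d, e, h1, h2, h3, h4, h5, h6, ha, hb, hd, he⟩
    rw [key a ha] at ha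
    rw [key b hb] at hb
    rw [key d hd] at hd
    rw [key e he] at he
    exact hg.2.2 ⟨a, b, d, e, h1, h2, h3, h4, h5, h6, ha, hb, hd, he⟩

theorem classify {n : ℕ} (hn : 4 ≤ n) (c : Fin n → ℕ) (hle : ∀ i, c i ≤ 3)
    (hg : GoodP c) (H : ∀ i, c i ≤ 2 → ¬ GoodP (bumpP c i)) :
    IsProfile321 c ∨ IsProfile2221 c := by
  have hpos : ∀ i, 1 ≤ c i := by
    intro i
    by_contra h
    exact H i (by omega) (goodP_bump_lt_two hg (by omega))
  by_cases h3 : ∃ i, c i = 3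
  · obtain ⟨i, hci⟩ := h3
    left
    have h2le : ∀ k, k ≠ i → c k ≤ 2 := by
      intro k hk
      by_contra hc
      exact hg.1 ⟨i, k, Ne.symm hk, by omega, by omega⟩
    have hj : ∃ j, j ≠ i ∧ c j = 2 := by
      by_contra hno
      push_neg at hno
      have hone : ∀ k, k ≠ i → c k = 1 := by
        intro k hk
        have := h2le k hk
        have := hno k hk
        have := hpos k
        omega
      obtain ⟨j, hji⟩ := Fintype.exists_ne_of_one_lt_card (by simp; omega) i
      apply H j (by rw [hone j hji]; omega)
      apply profile321_goodP
      refine ⟨i, j, Ne.symm hji, ?_, ?_, ?_⟩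
      · rw [bumpP_ne c (Ne.symm hji)]; exact hci
      · rw [bumpP_self]; rw [hone j hji]
      · intro k hki hkj
        rw [bumpP_ne c hkj]
        exact hone k hki
    obtain ⟨j, hji, hcj⟩ := hj
    refine ⟨i, j, Ne.symm hji, hci, hcj, ?_⟩
    intro k hki hkj
    have h1 := h2le k hki
    have h2 := hpos k
    by_contra hne
    have hck : c k = 2 := by omega
    exact hg.2.1 ⟨i, j, k, Ne.symm hji, Ne.symm hki, Ne.symm hkj, by omega, by omega, by omega⟩
  · push_neg at h3
    right
    have hle2 : ∀ i, c i ≤ 2 := by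
      intro i
      have := hle i
      have := h3 i
      omega
    -- find an index with value 1
    have h1ex : ∃ i, c i = 1 := by
      by_contra hno
      push_neg at hno
      have hall2 : ∀ i, c i = 2 := by
        intro i
        have := hpos i; have := hle2 i; have := hno i; omega
      have ha : (⟨0, by omega⟩ : Fin n) ≠ ⟨1, by omega⟩ := by simp [Fin.ext_iff]
      exact hg.2.2 ⟨⟨0, by omega⟩, ⟨1, by omega⟩, ⟨2, by omega⟩, ⟨3, by omega⟩,
        by simp [Fin.ext_iff], by simp [Fin.ext_iff], by simp [Fin.ext_iff],
        by simp [Fin.ext_iff], by simp [Fin.ext_iff], by simp [Fin.ext_iff],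
        by rw [hall2], by rw [hall2], by rw [hall2], by rw [hall2]⟩
    obtain ⟨i1, hi1⟩ := h1ex
    have hble : ∀ m, bumpP c i1 m ≤ 2 := by
      intro m
      by_cases hm : m = i1
      · subst hm; rw [bumpP_self]; omega
      · rw [bumpP_ne c hm]; exact hle2 m
    have hA : ¬ ∃ a b, a ≠ b ∧ 3 ≤ bumpP c i1 a ∧ 3 ≤ bumpP c i1 b := by
      rintro ⟨a, b, -, ha, -⟩
      have := hble a; omega
    have hB : ¬ ∃ a b d, a ≠ b ∧ a ≠ d ∧ b ≠ d ∧ 3 ≤ bumpP c i1 a ∧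
        2 ≤ bumpP c i1 b ∧ 2 ≤ bumpP c i1 d := by
      rintro ⟨a, b, d, -, -, -, ha, -, -⟩
      have := hble a; omega
    have hE : ∃ a b d e, a ≠ b ∧ a ≠ d ∧ a ≠ e ∧ b ≠ d ∧ b ≠ e ∧ d ≠ e ∧
        2 ≤ bumpP c i1 a ∧ 2 ≤ bumpP c i1 b ∧ 2 ≤ bumpP c i1 d ∧ 2 ≤ bumpP c i1 e := by
      by_contra hE
      exact H i1 (by omega) ⟨hA, hB, hE⟩
    obtain ⟨a, b, d, e, hab, had, hae, hbd, hbe, hde, ha, hb, hd, he⟩ := hE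
    have key : ∀ m, m ≠ i1 → 2 ≤ bumpP c i1 m → c m = 2 := by
      intro m hm h2
      rw [bumpP_ne c hm] at h2
      have := hle2 m; omega
    have main : ∃ x y z, x ≠ y ∧ x ≠ z ∧ y ≠ z ∧ c x = 2 ∧ c y = 2 ∧ c z = 2 := by
      by_cases h1 : a = i1
      · subst h1
        exact ⟨b, d, e, hbd, hbe, hde, key b (Ne.symm hab) hb, key d (Ne.symm had) hd,
          key e (Ne.symm hae) he⟩
      by_cases h2 : b = i1
      · subst h2
        exact ⟨a, d, e, had, hae, hde, key a hab ha, key d (Ne.symm hbd) hd,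
          key e (Ne.symm hbe) he⟩
      by_cases h4 : d = i1
      · subst h4
        exact ⟨a, b, e, hab, hae, hbe, key a had ha, key b hbd hb, key e (Ne.symm hde) he⟩
      · exact ⟨a, b, d, hab, had, hbd, key a h1 ha, key b h2 hb, key d h4 hd⟩
    obtain ⟨x, y, z, hxy, hxz, hyz, hx, hy, hz⟩ := main
    refine ⟨x, y, z, hxy, hxz, hyz, hx, hy, hz, ?_⟩
    intro m hmx hmy hmz
    by_contra hne
    have hcm : c m = 2 := by have := hpos m; have := hle2 m; omega
    exact hg.2.2 ⟨x, y, z, m, hxy, hxz, Ne.symm hmx, hyz, Ne.symm hmy, Ne.symm hmz,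
      by omega, by omega, by omega, by omega⟩

theorem facet_iff {n : ℕ} (hn : 4 ≤ n) (U : Finset (Fin n × Fin 3)) :
    IsFacetD n U ↔ IsProfile321 (profileOf U) ∨ IsProfile2221 (profileOf U) := by
  constructor
  · rintro ⟨hface, hmax⟩
    have hg : GoodP (profileOf U) := (face_iff_goodP U).1 hface
    apply classify hn _ (profile_le_three U) hg
    intro i hi hGB
    -- find a point (i, j) not in U
    have hss : U.filter (fun p => p.1 = i) ⊂ ({i} ×ˢ univ) := by
      apply HasSubset.Subset.ssubset_of_ne
      · intro p hp
        simp only [Finset.mem_filter] at hp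
        simp only [Finset.mem_product, Finset.mem_singleton, Finset.mem_univ, and_true]
        exact hp.2
      · intro h
        have : profileOf U i = 3 := by rw [profileOf, h]; simp
        omega
    obtain ⟨p, hpmem, hpnot⟩ := Finset.exists_of_ssubset hss
    have hp1 : p.1 = i := by
      simp only [Finset.mem_product, Finset.mem_singleton, Finset.mem_univ, and_true] at hpmem
      exact hpmem
    have hpU : p ∉ U := fun h => hpnot (Finset.mem_filter.2 ⟨h, hp1⟩)
    have hprof : profileOf (insert p U) = bumpP (profileOf U) i := by
      funext k
      rw [profile_insert U p hpU k, bumpP]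
      by_cases hk : k = i
      · subst hk; rw [if_pos hp1, if_pos rfl]
      · rw [if_neg (fun h => hk (hp1 ▸ h.symm)), if_neg hk]
    have hfaceW : IsFaceD n (insert p U) := by
      rw [face_iff_goodP, hprof]; exact hGB
    have := hmax (insert p U) hfaceW (Finset.subset_insert p U)
    exact hpU (this ▸ Finset.mem_insert_self p U)
  · intro h
    have hg : GoodP (profileOf U) := by
      rcases h with h | h
      · exact profile321_goodP h
      · exact profile2221_goodP h
    refine ⟨(face_iff_goodP U).2 hg, ?_⟩
    intro W hWface hUW
    by_contra hne
    obtain ⟨p, hpW, hpU⟩ := Finset.exists_of_ssubset (lt_of_le_of_ne hUW (Ne.symm hne))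
    have hWp : profileOf U p.1 + 1 ≤ profileOf W p.1 := by
      have hsub : insert p (U.filter (fun q => q.1 = p.1)) ⊆ W.filter (fun q => q.1 = p.1) := by
        intro q hq
        rcases Finset.mem_insert.1 hq with h' | h'
        · subst h'; exact Finset.mem_filter.2 ⟨hpW, rfl⟩
        · exact Finset.filter_subset_filter _ hUW h'
      have hcard := Finset.card_le_card hsub
      rwa [Finset.card_insert_of_notMem (fun h => hpU (Finset.mem_filter.1 h).1)] at hcard
    have hgW : GoodP (profileOf W) := (face_iff_goodP W).1 hWface
    by_cases h3 : profileOf U p.1 = 3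
    · have := profile_le_three W p.1; omega
    · have hble : ∀ k, bumpP (profileOf U) p.1 k ≤ profileOf W k := by
        intro k
        by_cases hk : k = p.1
        · subst hk; rw [bumpP_self]; exact hWp
        · rw [bumpP_ne _ hk]; exact profile_mono hUW k
      have hgb : GoodP (bumpP (profileOf U) p.1) := goodP_antitone hble hgW
      have hle2 : profileOf U p.1 ≤ 2 := by have := profile_le_three U p.1; omega
      rcases h with h | h
      · exact profile321_bump_bad h hle2 hgb
      · exact profile2221_bump_bad h p.1 hgb

def fsetEquiv (n : ℕ) : Finset (Fin n × Fin 3) ≃ (Fin n → Finset (Fin 3)) where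
  toFun U := fun i => Finset.univ.filter (fun j => (i, j) ∈ U)
  invFun f := Finset.univ.filter (fun p => p.2 ∈ f p.1)
  left_inv U := by ext p; simp
  right_inv f := by funext i; ext j; simp

theorem profile_fsetEquiv {n : ℕ} (U : Finset (Fin n × Fin 3)) (i : Fin n) :
    profileOf U i = ((fsetEquiv n U) i).card := by
  rw [profileOf]
  nth_rewrite 2 [← Finset.card_map ⟨fun j => (i, j), fun a b h => by simpa using h⟩]
  congr 1
  ext p
  simp only [Finset.mem_map, Function.Embedding.coeFn_mk, fsetEquiv, Equiv.coe_fn_mk,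
    Finset.mem_filter, Finset.mem_univ, true_and]
  constructor
  · rintro ⟨hp, hpi⟩
    refine ⟨p.2, ?_, ?_⟩ <;> rw [← hpi]
    exact hp
    rfl
  · rintro ⟨j, hj, rfl⟩
    exact ⟨hj, rfl⟩

theorem count_exact {n : ℕ} (d : Fin n → ℕ) :
    (Finset.univ.filter (fun f : Fin n → Finset (Fin 3) => ∀ k, (f k).card = d k)).card
      = ∏ k, Nat.choose 3 (d k) := by
  classical
  rw [← Fintype.card_subtype]
  rw [Fintype.card_congr
    (Equiv.subtypePiEquivPi (p := fun k (s : Finset (Fin 3)) => s.card = d k))]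
  rw [Fintype.card_pi]
  apply Finset.prod_congr rfl
  intro k _
  rw [Fintype.card_finset_len]
  rfl

instance {n : ℕ} : DecidablePred (fun c : Fin n → ℕ => IsProfile321 c) := fun c => by
  unfold IsProfile321; infer_instance

instance {n : ℕ} : DecidablePred (fun c : Fin n → ℕ => IsProfile2221 c) := fun c => by
  unfold IsProfile2221; infer_instance

instance {n : ℕ} (f : Fin n → Finset (Fin 3)) :
    Decidable (IsProfile321 (fun i => (f i).card)) := by
  unfold IsProfile321; infer_instance

instance {n : ℕ} (f : Fin n → Finset (Fin 3)) :
    Decidable (IsProfile2221 (fun i => (f i).card)) := by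
  unfold IsProfile2221; infer_instance

theorem count321 {n : ℕ} :
    (Finset.univ.filter (fun f : Fin n → Finset (Fin 3) =>
      IsProfile321 (fun i => (f i).card))).card = n * (n - 1) * 3 ^ (n - 1) := by
  classical
  set dd : Fin n × Fin n → Fin n → ℕ :=
    fun p k => if k = p.1 then 3 else if k = p.2 then 2 else 1 with hdd
  have hset : Finset.univ.filter (fun f : Fin n → Finset (Fin 3) =>
      IsProfile321 (fun i => (f i).card))
      = (Finset.univ.offDiag).biUnion
          (fun p => Finset.univ.filter (fun f => ∀ k, (f k).card = dd p k)) := by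
    ext f
    simp only [Finset.mem_filter, Finset.mem_univ, true_and, Finset.mem_biUnion]
    constructor
    · rintro ⟨i, j, hij, hi, hj, hrest⟩
      refine ⟨(i, j), Finset.mem_offDiag.2 ⟨Finset.mem_univ _, Finset.mem_univ _, hij⟩, ?_⟩
      intro k
      by_cases hk : k = i
      · subst hk; simpa [hdd] using hi
      · by_cases hk2 : k = j
        · subst hk2; simpa [hdd, hk] using hj
        · simpa [hdd, hk, hk2] using hrest k hk hk2
    · rintro ⟨⟨i, j⟩, hp, hall⟩
      have hij : i ≠ j := (Finset.mem_offDiag.1 hp).2.2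
      refine ⟨i, j, hij, ?_, ?_, ?_⟩
      · simpa [hdd] using hall i
      · simpa [hdd, Ne.symm hij] using hall j
      · intro k hki hkj
        simpa [hdd, hki, hkj] using hall k
  rw [hset, Finset.card_biUnion]
  · have hcard : ∀ p ∈ Finset.univ.offDiag, (Finset.univ.filter
        (fun f : Fin n → Finset (Fin 3) => ∀ k, (f k).card = dd p k)).card = 3 ^ (n - 1) := by
      intro p hp
      rw [count_exact]
      have h1 : ∀ k, Nat.choose 3 (dd p k) = if k = p.1 then 1 else 3 := by
        intro k
        simp only [hdd]
        by_cases h1 : k = p.1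
        · rw [if_pos h1, if_pos h1]; decide
        · rw [if_neg h1, if_neg h1]
          by_cases h2 : k = p.2
          · rw [if_pos h2]; decide
          · rw [if_neg h2]; decide
      calc ∏ k, Nat.choose 3 (dd p k) = ∏ k, if k = p.1 then 1 else 3 :=
            Finset.prod_congr rfl (fun k _ => h1 k)
        _ = 3 ^ (n - 1) := by
            rw [← Finset.mul_prod_erase Finset.univ _ (Finset.mem_univ p.1)]
            rw [if_pos rfl, one_mul]
            rw [Finset.prod_congr rfl (fun k hk => if_neg (Finset.ne_of_mem_erase hk))]
            rw [Finset.prod_const]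
            congr 1
            rw [Finset.card_erase_of_mem (Finset.mem_univ _), Finset.card_univ, Fintype.card_fin]
    rw [Finset.sum_congr rfl hcard, Finset.sum_const, Finset.offDiag_card,
      Finset.card_univ, Fintype.card_fin, smul_eq_mul]
    congr 1
    have h : n * n = n * (n - 1) + n := by
      obtain ⟨m, rfl⟩ | rfl : (∃ m, n = m + 1) ∨ n = 0 := by
        rcases n with _ | m
        · exact Or.inr rfl
        · exact Or.inl ⟨m, rfl⟩
      · simp [Nat.mul_succ]
      · simp
    omega
  · intro p hp q hq hpq
    simp only [Finset.disjoint_left, Finset.mem_filter, Finset.mem_univ, true_and]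
    intro f hfp hfq
    apply hpq
    have hpd := (Finset.mem_offDiag.1 hp).2.2
    have hqd := (Finset.mem_offDiag.1 hq).2.2
    have e1 : p.1 = q.1 := by
      by_contra hne
      have h := (hfp p.1).symm.trans (hfq p.1)
      simp only [hdd] at h
      rw [if_pos trivial, if_neg hne] at h
      by_cases h2 : p.1 = q.2
      · rw [if_pos h2] at h; omega
      · rw [if_neg h2] at h; omega
    have e2 : p.2 = q.2 := by
      by_contra hne
      have h := (hfp p.2).symm.trans (hfq p.2)
      simp only [hdd] at h
      rw [if_neg (Ne.symm hpd), if_pos trivial] at h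
      by_cases h2 : p.2 = q.1
      · rw [if_pos h2] at h; omega
      · rw [if_neg h2, if_neg hne] at h; omega
    exact Prod.ext e1 e2

theorem count2221 {n : ℕ} :
    (Finset.univ.filter (fun f : Fin n → Finset (Fin 3) =>
      IsProfile2221 (fun i => (f i).card))).card = n.choose 3 * 3 ^ n := by
  classical
  set dd : Finset (Fin n) → Fin n → ℕ := fun s k => if k ∈ s then 2 else 1 with hdd
  have hset : Finset.univ.filter (fun f : Fin n → Finset (Fin 3) =>
      IsProfile2221 (fun i => (f i).card))
      = (Finset.univ.powersetCard 3).biUnion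
          (fun s => Finset.univ.filter (fun f => ∀ k, (f k).card = dd s k)) := by
    ext f
    simp only [Finset.mem_filter, Finset.mem_univ, true_and, Finset.mem_biUnion,
      Finset.mem_powersetCard_univ]
    constructor
    · rintro ⟨i, j, k, hij, hik, hjk, hi, hj, hk, hrest⟩
      refine ⟨{i, j, k}, ?_, ?_⟩
      · rw [Finset.card_insert_of_notMem (by simp [hij, hik]),
          Finset.card_insert_of_notMem (by simp [hjk]), Finset.card_singleton]
      · intro m
        by_cases h1 : m = i
        · subst h1; simpa [hdd] using hi
        by_cases h2 : m = j
        · subst h2; simpa [hdd] using hj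
        by_cases h3 : m = k
        · subst h3; simpa [hdd] using hk
        · simpa [hdd, h1, h2, h3] using hrest m h1 h2 h3
    · rintro ⟨s, hs3, hall⟩
      obtain ⟨i, j, k, hij, hik, hjk, rfl⟩ := Finset.card_eq_three.1 hs3
      refine ⟨i, j, k, hij, hik, hjk, ?_, ?_, ?_, ?_⟩
      · simpa [hdd] using hall i
      · simpa [hdd] using hall j
      · simpa [hdd] using hall k
      · intro l h1 h2 h3
        simpa [hdd, h1, h2, h3] using hall l
  rw [hset, Finset.card_biUnion]
  · have hcard : ∀ s ∈ Finset.univ.powersetCard 3, (Finset.univ.filter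
        (fun f : Fin n → Finset (Fin 3) => ∀ k, (f k).card = dd s k)).card = 3 ^ n := by
      intro s _
      rw [count_exact]
      have h1 : ∀ k, Nat.choose 3 (dd s k) = 3 := by
        intro k
        simp only [hdd]
        split <;> rfl
      rw [Finset.prod_congr rfl (fun k _ => h1 k), Finset.prod_const, Finset.card_univ,
        Fintype.card_fin]
    rw [Finset.sum_congr rfl hcard, Finset.sum_const, smul_eq_mul,
      Finset.card_powersetCard, Finset.card_univ, Fintype.card_fin]
  · intro s hs t ht hst
    simp only [Finset.disjoint_left, Finset.mem_filter, Finset.mem_univ, true_and]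
    intro f hfs hft
    apply hst
    ext k
    have h := (hfs k).symm.trans (hft k)
    constructor <;> intro hk
    · by_contra hk2; simp [hdd, hk, hk2] at h
    · by_contra hk2; simp [hdd, hk, hk2] at h

theorem ncard_profile_set {n : ℕ} (P : (Fin n → ℕ) → Prop) [DecidablePred P] :
    {U : Finset (Fin n × Fin 3) | P (profileOf U)}.ncard
      = (Finset.univ.filter
          (fun f : Fin n → Finset (Fin 3) => P (fun i => (f i).card))).card := by
  classical
  have e : {U : Finset (Fin n × Fin 3) // P (profileOf U)}
      ≃ {f : Fin n → Finset (Fin 3) // P (fun i => (f i).card)} :=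
    Equiv.subtypeEquiv (fsetEquiv n) (fun U => by
      have h : profileOf U = fun i => ((fsetEquiv n U) i).card := funext (profile_fsetEquiv U)
      rw [h])
  rw [← Nat.card_coe_set_eq]
  have : Nat.card {U : Finset (Fin n × Fin 3) | P (profileOf U)}
      = Nat.card {U : Finset (Fin n × Fin 3) // P (profileOf U)} := rfl
  rw [this, Nat.card_congr e, Nat.card_eq_fintype_card, Fintype.card_subtype]

theorem facet_counts_main (n : ℕ) (hn : 4 ≤ n) :
    {U : Finset (Fin n × Fin 3) | IsFacetD n U ∧ IsProfile321 (profileOf U)}.ncard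
        = n * (n - 1) * 3 ^ (n - 1) ∧
    {U : Finset (Fin n × Fin 3) | IsFacetD n U ∧ IsProfile2221 (profileOf U)}.ncard
        = n.choose 3 * 3 ^ n ∧
    {U : Finset (Fin n × Fin 3) | IsFacetD n U}.ncard
        = n * (n - 1) * 3 ^ (n - 1) + n.choose 3 * 3 ^ n := by
  have h321set : {U : Finset (Fin n × Fin 3) | IsFacetD n U ∧ IsProfile321 (profileOf U)}
      = {U : Finset (Fin n × Fin 3) | IsProfile321 (profileOf U)} := by
    ext U
    simp only [Set.mem_setOf_eq]
    exact ⟨And.right, fun h => ⟨(facet_iff hn U).2 (Or.inl h), h⟩⟩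
  have h2221set : {U : Finset (Fin n × Fin 3) | IsFacetD n U ∧ IsProfile2221 (profileOf U)}
      = {U : Finset (Fin n × Fin 3) | IsProfile2221 (profileOf U)} := by
    ext U
    simp only [Set.mem_setOf_eq]
    exact ⟨And.right, fun h => ⟨(facet_iff hn U).2 (Or.inr h), h⟩⟩
  have hfacetset : {U : Finset (Fin n × Fin 3) | IsFacetD n U}
      = {U : Finset (Fin n × Fin 3) | IsProfile321 (profileOf U)}
        ∪ {U : Finset (Fin n × Fin 3) | IsProfile2221 (profileOf U)} := by
    ext U
    simp only [Set.mem_setOf_eq, Set.mem_union]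
    exact facet_iff hn U
  have hdisj : Disjoint {U : Finset (Fin n × Fin 3) | IsProfile321 (profileOf U)}
      {U : Finset (Fin n × Fin 3) | IsProfile2221 (profileOf U)} := by
    rw [Set.disjoint_left]
    rintro U h1 h2
    simp only [Set.mem_setOf_eq] at h1 h2
    obtain ⟨i, j, hij, hi, -, -⟩ := h1
    obtain ⟨x, y, z, hxy, hxz, hyz, hx, hy, hz, hrest⟩ := h2
    by_cases e1 : i = x
    · subst e1; omega
    by_cases e2 : i = y
    · subst e2; omega
    by_cases e3 : i = z
    · subst e3; omega
    · have := hrest i e1 e2 e3; omega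
  refine ⟨?_, ?_, ?_⟩
  · rw [h321set, ncard_profile_set (fun c => IsProfile321 c)]
    exact count321
  · rw [h2221set, ncard_profile_set (fun c => IsProfile2221 c)]
    exact count2221
  · rw [hfacetset, Set.ncard_union_eq hdisj (Set.toFinite _) (Set.toFinite _),
      ncard_profile_set (fun c => IsProfile321 c), ncard_profile_set (fun c => IsProfile2221 c)]
    rw [count321, count2221]

/-- Facet counts of `Δₙ` (`n ≥ 4`): there are `n(n-1)·3^(n-1)` facets with
profile a permutation of `(3,2,1,…,1)`, `C(n,3)·3ⁿ` facets with profile a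
permutation of `(2,2,2,1,…,1)`, and these are all the facets. -/
theorem facet_counts_of_Delta_n (n : ℕ) (hn : 4 ≤ n) :
    {U : Finset (Fin n × Fin 3) | IsFacetD n U ∧ IsProfile321 (profileOf U)}.ncard
        = n * (n - 1) * 3 ^ (n - 1) ∧
    {U : Finset (Fin n × Fin 3) | IsFacetD n U ∧ IsProfile2221 (profileOf U)}.ncard
        = n.choose 3 * 3 ^ n ∧
    {U : Finset (Fin n × Fin 3) | IsFacetD n U}.ncard
        = n * (n - 1) * 3 ^ (n - 1) + n.choose 3 * 3 ^ n := by
  exact facet_counts_main n hn
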